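/- arXiv:1311.4478 — 2 statements merged into one kernel-verified Lean document; each statement's English description precedes it below -/
import Mathlib

section
/- Let p be a prime, k a field of characteristic p, γ ∈ k a root of unity of order q, and g(ζ) = γζ + ... a power series in k[[ζ]]. Set i_n = ord((g^{q p^n}(ζ) − ζ)/ζ) and suppose i_n is finite. If i_n is not divisible by p, then i_{n+1} ≥ p·i_n + q; if i_n is divisible by p, then i_{n+1} = p·i_n. -/
open PowerSeries

/-- Formal composition `f ∘ g` of power series (correct when `g` has zero constant term). -/
noncomputable def fcomp {k : Type*} [CommRing k] (f g : PowerSeries k) : PowerSeries k :=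
  PowerSeries.mk fun n =>
    ∑ m ∈ Finset.range (n + 1), (PowerSeries.coeff m f) * (PowerSeries.coeff n (g ^ m))

/-- `m`-th iterate of a power series with zero constant term. -/
noncomputable def fit {k : Type*} [CommRing k] (g : PowerSeries k) : ℕ → PowerSeries k
  | 0 => PowerSeries.X
  | n + 1 => fcomp g (fit g n)

section Aux

variable {k : Type*} [CommRing k]

lemma coeff_fcomp (f g : PowerSeries k) (n : ℕ) :
    coeff n (fcomp f g) = ∑ m ∈ Finset.range (n + 1), (coeff m f) * (coeff n (g ^ m)) := by
  simp [fcomp, coeff_mk]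

lemma coeff_pow_eq_zero {g : PowerSeries k} (hg : constantCoeff g = 0)
    {n m : ℕ} (h : n < m) : coeff n (g ^ m) = 0 := by
  have : (X : PowerSeries k) ^ m ∣ g ^ m := pow_dvd_pow_of_dvd (X_dvd_iff.mpr hg) m
  exact X_pow_dvd_iff.mp this n h

lemma coeff_fcomp_large {g : PowerSeries k} (hg : constantCoeff g = 0)
    (f : PowerSeries k) {n N : ℕ} (hN : n < N) :
    coeff n (fcomp f g) = ∑ m ∈ Finset.range N, (coeff m f) * (coeff n (g ^ m)) := by
  rw [coeff_fcomp]
  apply Finset.sum_subset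
  · intro x hx
    simp only [Finset.mem_range] at *
    omega
  · intro x hx hx'
    simp only [Finset.mem_range] at *
    have : n < x := by omega
    rw [coeff_pow_eq_zero hg this, mul_zero]

lemma coeff_fcomp_aeval {g : PowerSeries k} (hg : constantCoeff g = 0)
    (f : PowerSeries k) {n N : ℕ} (hN : n < N) :
    coeff n (fcomp f g) = coeff n (Polynomial.aeval g (trunc N f)) := by
  have hdeg : (trunc N f).natDegree < N := by
    by_cases h0 : trunc N f = 0
    · simp [h0]; omega
    · exact (Polynomial.natDegree_lt_iff_degree_lt h0).mpr (degree_trunc_lt f N)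
  rw [coeff_fcomp_large hg f hN, Polynomial.aeval_eq_sum_range' hdeg, map_sum]
  apply Finset.sum_congr rfl
  intro m hm
  simp only [Finset.mem_range] at hm
  rw [coeff_trunc, if_pos hm, map_smul, smul_eq_mul]

lemma coeff_aeval_congr {g : PowerSeries k} (hg : constantCoeff g = 0)
    {P Q : Polynomial k} {n : ℕ} (h : ∀ m, m ≤ n → P.coeff m = Q.coeff m) :
    coeff n (Polynomial.aeval g P) = coeff n (Polynomial.aeval g Q) := by
  have key : ∀ R : Polynomial k, (∀ m, m ≤ n → R.coeff m = 0) →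
      coeff n (Polynomial.aeval g R) = 0 := by
    intro R hR
    rw [Polynomial.aeval_eq_sum_range' (lt_add_one R.natDegree), map_sum]
    apply Finset.sum_eq_zero
    intro m _
    rcases le_or_gt m n with hm | hm
    · rw [hR m hm, zero_smul, map_zero]
    · rw [map_smul, smul_eq_mul, coeff_pow_eq_zero hg hm, mul_zero]
  have := key (P - Q) (by intro m hm; simp [h m hm])
  rw [map_sub, map_sub] at this
  exact sub_eq_zero.mp this

lemma fcomp_mul {g : PowerSeries k} (hg : constantCoeff g = 0) (f₁ f₂ : PowerSeries k) :
    fcomp (f₁ * f₂) g = fcomp f₁ g * fcomp f₂ g := by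
  ext n
  rw [coeff_fcomp_aeval hg _ (lt_add_one n)]
  have h1 : coeff n (Polynomial.aeval g (trunc (n+1) (f₁ * f₂)))
      = coeff n (Polynomial.aeval g (trunc (n+1) f₁ * trunc (n+1) f₂)) := by
    apply coeff_aeval_congr hg
    intro m hm
    rw [coeff_trunc, if_pos (by omega), PowerSeries.coeff_mul, Polynomial.coeff_mul]
    apply Finset.sum_congr rfl
    intro x hx
    rw [Finset.HasAntidiagonal.mem_antidiagonal] at hx
    rw [coeff_trunc, coeff_trunc, if_pos (by omega), if_pos (by omega)]
  rw [h1, map_mul, PowerSeries.coeff_mul, PowerSeries.coeff_mul]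
  apply Finset.sum_congr rfl
  intro x hx
  rw [Finset.HasAntidiagonal.mem_antidiagonal] at hx
  rw [← coeff_fcomp_aeval hg f₁ (by omega : x.1 < n+1),
      ← coeff_fcomp_aeval hg f₂ (by omega : x.2 < n+1)]

lemma fcomp_one (g : PowerSeries k) : fcomp 1 g = 1 := by
  ext n
  rw [coeff_fcomp]
  rw [Finset.sum_eq_single 0]
  · simp
  · intro m hm hm0
    rw [PowerSeries.coeff_one, if_neg hm0, zero_mul]
  · simp

lemma fcomp_pow {g : PowerSeries k} (hg : constantCoeff g = 0) (f : PowerSeries k) (m : ℕ) :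
    fcomp (f ^ m) g = (fcomp f g) ^ m := by
  induction m with
  | zero => simpa using fcomp_one g
  | succ m ih => rw [pow_succ, pow_succ, fcomp_mul hg, ih]

lemma fcomp_X_left {g : PowerSeries k} (hg : constantCoeff g = 0) : fcomp X g = g := by
  ext n
  rw [coeff_fcomp]
  rcases Nat.eq_zero_or_pos n with rfl | hn
  · simpa using hg.symm
  · rw [Finset.sum_eq_single 1]
    · simp
    · intro m hm hm1
      rcases Nat.eq_zero_or_pos m with rfl | hm0
      · simp
      · rw [coeff_X, if_neg hm1, zero_mul]
    · intro h
      simp only [Finset.mem_range] at h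
      omega

lemma fcomp_X_right (f : PowerSeries k) : fcomp f X = f := by
  ext n
  rw [coeff_fcomp, Finset.sum_eq_single n]
  · rw [← pow_one (X : PowerSeries k), ← pow_mul, coeff_X_pow, if_pos (by omega), mul_one]
  · intro m hm hmn
    rw [← pow_one (X : PowerSeries k), ← pow_mul, coeff_X_pow, if_neg (by omega), mul_zero]
  · intro h
    simp only [Finset.mem_range] at h
    omega

lemma fcomp_assoc {g h : PowerSeries k} (hh : constantCoeff h = 0)
    (hg : constantCoeff g = 0) (f : PowerSeries k) :
    fcomp (fcomp f h) g = fcomp f (fcomp h g) := by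
  have hhg : constantCoeff (fcomp h g) = 0 := by
    have := coeff_fcomp h g 0
    simp only [coeff_zero_eq_constantCoeff] at this
    simpa [hh] using this
  ext n
  rw [coeff_fcomp, coeff_fcomp]
  have : ∀ m ∈ Finset.range (n+1),
      coeff m f * coeff n ((fcomp h g) ^ m)
      = ∑ r ∈ Finset.range (n+1), coeff m f * (coeff r (h ^ m) * coeff n (g ^ r)) := by
    intro m _
    rw [← fcomp_pow hg h m, coeff_fcomp, Finset.mul_sum]
  rw [Finset.sum_congr rfl this, Finset.sum_comm]
  apply Finset.sum_congr rfl
  intro r hr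
  rw [Finset.mem_range] at hr
  rw [coeff_fcomp_large hh f (by omega : r < n + 1), Finset.sum_mul]
  apply Finset.sum_congr rfl
  intro m _
  ring

lemma constantCoeff_fcomp (f g : PowerSeries k) :
    constantCoeff (fcomp f g) = constantCoeff f := by
  have := coeff_fcomp f g 0
  simp only [coeff_zero_eq_constantCoeff] at this
  simpa using this

lemma coeff_one_fcomp (f g : PowerSeries k) :
    coeff 1 (fcomp f g) = coeff 1 f * coeff 1 g := by
  rw [coeff_fcomp]
  rw [show Finset.range 2 = {0, 1} by rfl]
  simp [PowerSeries.coeff_one]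

lemma constantCoeff_fit {g : PowerSeries k} (hg : constantCoeff g = 0) (m : ℕ) :
    constantCoeff (fit g m) = 0 := by
  cases m with
  | zero => simp [fit]
  | succ m => rw [fit, constantCoeff_fcomp]; exact hg

lemma coeff_one_fit (g : PowerSeries k) (m : ℕ) :
    coeff 1 (fit g m) = (coeff 1 g) ^ m := by
  induction m with
  | zero => simp [fit]
  | succ m ih => rw [fit, coeff_one_fcomp, ih, pow_succ]; ring

lemma fit_comm {g : PowerSeries k} (hg : constantCoeff g = 0) (m : ℕ) :
    fcomp (fit g m) g = fcomp g (fit g m) := by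
  induction m with
  | zero => rw [show fit g 0 = X from rfl, fcomp_X_left hg, fcomp_X_right]
  | succ m ih =>
    rw [show fit g (m+1) = fcomp g (fit g m) from rfl,
      fcomp_assoc (constantCoeff_fit hg m) hg, ih]

lemma fit_succ' {g : PowerSeries k} (hg : constantCoeff g = 0) (m : ℕ) :
    fit g (m + 1) = fcomp (fit g m) g := by
  rw [show fit g (m+1) = fcomp g (fit g m) from rfl, fit_comm hg]

lemma fit_add {g : PowerSeries k} (hg : constantCoeff g = 0) (s t : ℕ) :
    fit g (s + t) = fcomp (fit g s) (fit g t) := by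
  induction t with
  | zero => exact (fcomp_X_right _).symm
  | succ t ih =>
    rw [show s + (t + 1) = (s + t) + 1 from rfl,
      show fit g (s + t + 1) = fcomp g (fit g (s+t)) from rfl, ih,
      show fit g (t + 1) = fcomp g (fit g t) from rfl,
      ← fcomp_assoc (constantCoeff_fit hg s) (constantCoeff_fit hg t),
      ← fit_comm hg s, fcomp_assoc hg (constantCoeff_fit hg t)]

lemma fit_mul {g : PowerSeries k} (hg : constantCoeff g = 0) (a b : ℕ) :
    fit g (a * b) = fit (fit g a) b := by
  induction b with
  | zero => rfl
  | succ b ih =>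
    rw [Nat.mul_succ, fit_add hg, ih,
      show fit (fit g a) (b+1) = fcomp (fit g a) (fit (fit g a) b) from rfl]
    exact fit_comm (constantCoeff_fit hg a) b

lemma coeff_eq_zero_of_X_pow_dvd {φ : PowerSeries k} {N n : ℕ}
    (h : (X : PowerSeries k) ^ N ∣ φ) (hn : n < N) : coeff n φ = 0 :=
  X_pow_dvd_iff.mp h n hn

/-- For `h = X + E` with `X^(i+1) ∣ E`, `i ≥ 1`:
`X^(r+i) ∣ h^r - X^r` and the coefficient of `X^(r+i)` is `r * u`. -/
lemma pow_sub_X_pow {h : PowerSeries k} {i : ℕ} (hi : 1 ≤ i)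
    (hE : (X : PowerSeries k) ^ (i+1) ∣ h - X) (r : ℕ) :
    (X : PowerSeries k) ^ (r + i) ∣ h ^ r - X ^ r ∧
      coeff (r + i) (h ^ r - X ^ r) = (r : k) * coeff (i+1) (h - X) := by
  set E : PowerSeries k := h - X with hEdef
  set u : k := coeff (i+1) (h - X) with hu
  induction r with
  | zero => simp
  | succ r ih =>
    obtain ⟨ihd, ihc⟩ := ih
    have key : h ^ (r+1) - X ^ (r+1)
        = X * (h ^ r - X ^ r) + E * (h ^ r - X ^ r) + E * X ^ r := by
      rw [hEdef]; ring
    constructor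
    · rw [key]
      have h1 : (X : PowerSeries k) ^ (r+1+i) ∣ X * (h ^ r - X ^ r) := by
        rw [show r+1+i = 1 + (r+i) from by ring, pow_add, pow_one]
        exact mul_dvd_mul_left _ ihd
      have h2 : (X : PowerSeries k) ^ (r+1+i) ∣ E * (h ^ r - X ^ r) := by
        have : (X : PowerSeries k) ^ ((i+1) + (r+i)) ∣ E * (h ^ r - X ^ r) := by
          rw [pow_add]; exact mul_dvd_mul hE ihd
        exact dvd_trans (pow_dvd_pow _ (by omega)) this
      have h3 : (X : PowerSeries k) ^ (r+1+i) ∣ E * X ^ r := by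
        have : (X : PowerSeries k) ^ ((i+1) + r) ∣ E * X ^ r := by
          rw [pow_add]; exact mul_dvd_mul hE dvd_rfl
        exact dvd_trans (pow_dvd_pow _ (by omega)) this
      exact dvd_add (dvd_add h1 h2) h3
    · rw [key, map_add, map_add]
      have c1 : coeff (r+1+i) (X * (h ^ r - X ^ r)) = (r : k) * u := by
        rw [show r+1+i = (r+i) + 1 from by ring, coeff_succ_X_mul]
        exact ihc
      have c2 : coeff (r+1+i) (E * (h ^ r - X ^ r)) = 0 := by
        apply coeff_eq_zero_of_X_pow_dvd (N := (i+1) + (r+i))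
        · rw [pow_add]; exact mul_dvd_mul hE ihd
        · omega
      have c3 : coeff (r+1+i) (E * X ^ r) = u := by
        rw [mul_comm, show r+1+i = (i+1) + r from by ring, coeff_X_pow_mul]
      rw [c1, c2, c3, Nat.cast_succ]; ring

/-- Leading coefficient of `g ^ m` is `(coeff 1 g) ^ m`. -/
lemma coeff_self_pow {g : PowerSeries k} (hg : constantCoeff g = 0) (m : ℕ) :
    coeff m (g ^ m) = (coeff 1 g) ^ m := by
  induction m with
  | zero => simp
  | succ m ih =>
    rw [pow_succ, mul_comm, PowerSeries.coeff_mul, Finset.sum_eq_single (1, m)]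
    · rw [ih, pow_succ]; ring
    · rintro ⟨x, y⟩ hxy hne
      rw [Finset.HasAntidiagonal.mem_antidiagonal] at hxy
      rcases lt_trichotomy y m with hy | rfl | hy
      · rw [coeff_pow_eq_zero hg hy, mul_zero]
      · exfalso; exact hne (by simp; omega)
      · have hx : x = 0 := by omega
        subst hx
        simp only [coeff_zero_eq_constantCoeff, hg, zero_mul]
    · intro hmem
      exfalso
      exact hmem (Finset.HasAntidiagonal.mem_antidiagonal.mpr (by omega))

/-- Key step: applying `φ ↦ φ ∘ h - φ` raises `X`-adic order by `i`, with
leading coefficient multiplied by `m * u`. -/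
lemma fcomp_sub_self {h : PowerSeries k} {i : ℕ} (hi : 1 ≤ i)
    (hh : constantCoeff h = 0)
    (hE : (X : PowerSeries k) ^ (i+1) ∣ h - X)
    {φ : PowerSeries k} {m : ℕ} (hφ : (X : PowerSeries k) ^ m ∣ φ) :
    (X : PowerSeries k) ^ (m + i) ∣ fcomp φ h - φ ∧
      coeff (m + i) (fcomp φ h - φ)
        = coeff m φ * ((m : k) * coeff (i+1) (h - X)) := by
  have main : ∀ s : ℕ, coeff s (fcomp φ h - φ)
      = ∑ r ∈ Finset.range (s+1), coeff r φ * coeff s (h ^ r - X ^ r) := by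
    intro s
    rw [map_sub, coeff_fcomp]
    have : coeff s φ = ∑ r ∈ Finset.range (s+1), coeff r φ * coeff s ((X : PowerSeries k) ^ r) := by
      rw [Finset.sum_eq_single s]
      · rw [coeff_X_pow, if_pos rfl, mul_one]
      · intro r hr hrs; rw [coeff_X_pow, if_neg (fun hh => hrs hh.symm), mul_zero]
      · intro hmem; exact absurd (Finset.mem_range.mpr (by omega)) hmem
    rw [this, ← Finset.sum_sub_distrib]
    apply Finset.sum_congr rfl
    intro r _
    rw [map_sub]; ring
  constructor
  · rw [X_pow_dvd_iff]
    intro s hs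
    rw [main s]
    apply Finset.sum_eq_zero
    intro r _
    rcases lt_or_ge r m with hr | hr
    · rw [coeff_eq_zero_of_X_pow_dvd hφ hr, zero_mul]
    · rw [coeff_eq_zero_of_X_pow_dvd (pow_sub_X_pow hi hE r).1 (by omega), mul_zero]
  · rw [main (m+i), Finset.sum_eq_single m]
    · rw [(pow_sub_X_pow hi hE m).2]
    · intro r hr hrm
      rcases lt_or_ge r m with h1 | h1
      · rw [coeff_eq_zero_of_X_pow_dvd hφ h1, zero_mul]
      · rw [coeff_eq_zero_of_X_pow_dvd (pow_sub_X_pow hi hE r).1 (by omega), mul_zero]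
    · intro hmem; exact absurd (Finset.mem_range.mpr (by omega)) hmem

/-- Keating's core lemma, via the operator identity `(1+N)^p = 1 + N^p` in char `p`. -/
lemma keating_core (p : ℕ) (hp : p.Prime) [CharP k p]
    {h : PowerSeries k} {i : ℕ} (hi : 1 ≤ i) (hh : constantCoeff h = 0)
    (hE : (X : PowerSeries k) ^ (i+1) ∣ h - X) :
    (X : PowerSeries k) ^ (1 + p * i) ∣ fit h p - X ∧
      coeff (1 + p * i) (fit h p - X)
        = (coeff (i+1) (h - X)) ^ p * ∏ t ∈ Finset.range p, ((1 + t * i : ℕ) : k) := by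
  haveI : Fact p.Prime := ⟨hp⟩
  set u : k := coeff (i+1) (h - X) with hu
  set C : Module.End k (PowerSeries k) :=
    { toFun := fun φ => fcomp φ h
      map_add' := by
        intro f f'
        ext n
        simp only [coeff_fcomp, map_add, add_mul, Finset.sum_add_distrib]
      map_smul' := by
        intro c f
        ext n
        simp only [coeff_fcomp, map_smul, smul_eq_mul, RingHom.id_apply, Finset.mul_sum, mul_assoc] } with hC
  have hCapp : ∀ φ : PowerSeries k, C φ = fcomp φ h := fun _ => rfl
  set N : Module.End k (PowerSeries k) := C - 1 with hN
  have hNapp : ∀ φ : PowerSeries k, N φ = fcomp φ h - φ := by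
    intro φ
    rw [hN, LinearMap.sub_apply, hCapp, Module.End.one_apply]
  -- claim 1 : iterating N
  have claim1 : ∀ r : ℕ, (X : PowerSeries k) ^ (1 + r * i) ∣ (N ^ r) X ∧
      coeff (1 + r * i) ((N ^ r) X)
        = u ^ r * ∏ t ∈ Finset.range r, ((1 + t * i : ℕ) : k) := by
    intro r
    induction r with
    | zero => simp
    | succ r ih =>
      obtain ⟨ihd, ihc⟩ := ih
      have happ : (N ^ (r+1)) (X : PowerSeries k) = N ((N ^ r) X) := by
        rw [pow_succ', Module.End.mul_apply]
      obtain ⟨d2, c2⟩ := fcomp_sub_self hi hh hE ihd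
      constructor
      · rw [happ, hNapp]
        rw [show 1 + (r+1) * i = (1 + r * i) + i from by ring]
        exact d2
      · rw [happ, hNapp, show 1 + (r+1) * i = (1 + r * i) + i from by ring, c2, ihc,
          Finset.prod_range_succ]
        push_cast
        ring
  -- claim 2 : C^m X = fit h m
  have claim2 : ∀ m : ℕ, (C ^ m) (X : PowerSeries k) = fit h m := by
    intro m
    induction m with
    | zero => simp [fit]
    | succ m ih =>
      rw [pow_succ', Module.End.mul_apply, ih, hCapp, ← fit_succ' hh]
  -- char p binomial
  haveI hcharEnd : CharP (Module.End k (PowerSeries k)) p := by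
    apply charP_of_injective_ringHom (f := algebraMap k (Module.End k (PowerSeries k)))
    · intro a b hab
      have := congrArg (fun (T : Module.End k (PowerSeries k)) => coeff 0 (T 1)) hab
      simpa [Module.algebraMap_end_apply] using this
  have hCN : C = 1 + N := by rw [hN]; abel
  have hpow : C ^ p = 1 + N ^ p := by
    rw [hCN, add_pow_char_of_commute p (Commute.one_left N), one_pow]
  have key : fit h p - X = (N ^ p) X := by
    rw [← claim2 p, hpow, LinearMap.add_apply, Module.End.one_apply]
    abel
  rw [key]
  exact claim1 p

/-- If `f = X + u X^(a+1) + ...` (`u ≠ 0`) commutes with `g = γ X + ...` then `γ^a = 1`. -/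
lemma gamma_pow_eq_one {K : Type*} [Field K] {g f : PowerSeries K}
    (hg0 : constantCoeff g = 0) {a : ℕ} (ha : 1 ≤ a)
    (hfa : (X : PowerSeries K) ^ (a+1) ∣ f - X)
    (hu : coeff (a+1) (f - X) ≠ 0)
    (hγ0 : coeff 1 g ≠ 0)
    (hcomm : fcomp g f = fcomp f g) :
    (coeff 1 g) ^ a = 1 := by
  set γ : K := coeff 1 g with hγ
  set u : K := coeff (a+1) (f - X) with huu
  have hf0 : constantCoeff f = 0 := by
    have := coeff_eq_zero_of_X_pow_dvd hfa (show 0 < a+1 by omega)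
    simp only [map_sub] at this
    rw [coeff_zero_eq_constantCoeff] at this
    simpa using sub_eq_zero.mp this
  have hfm : ∀ m, m ≤ a → m ≠ 1 → coeff m f = 0 := by
    intro m hm hm1
    have := coeff_eq_zero_of_X_pow_dvd hfa (show m < a+1 by omega)
    rw [map_sub, coeff_X, if_neg hm1, sub_zero] at this
    exact this
  have hf1 : coeff 1 f = 1 := by
    have := coeff_eq_zero_of_X_pow_dvd hfa (show 1 < a+1 by omega)
    rw [map_sub, coeff_X, if_pos rfl] at this
    exact sub_eq_zero.mp this
  have hfa1 : coeff (a+1) f = u := by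
    rw [huu, map_sub, coeff_X, if_neg (by omega), sub_zero]
  have hcoefpow : ∀ m, 2 ≤ m → m ≤ a + 1 →
      coeff (a+1) (f ^ m) = if a + 1 = m then 1 else 0 := by
    intro m h2 hm
    have hd := (pow_sub_X_pow ha hfa m).1
    have : coeff (a+1) (f ^ m - X ^ m) = 0 :=
      coeff_eq_zero_of_X_pow_dvd hd (by omega)
    have heq : coeff (a+1) (f ^ m) = coeff (a+1) ((X : PowerSeries K) ^ m) := by
      rw [map_sub] at this
      exact sub_eq_zero.mp this
    rw [heq, coeff_X_pow]
  -- left side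
  have lhs : coeff (a+1) (fcomp g f) = γ * u + coeff (a+1) g := by
    rw [coeff_fcomp]
    have hsub : ({1, a+1} : Finset ℕ) ⊆ Finset.range (a+2) := by
      intro x hx
      simp only [Finset.mem_insert, Finset.mem_singleton] at hx
      rcases hx with rfl | rfl <;> simp [Finset.mem_range] <;> omega
    rw [← Finset.sum_subset hsub]
    · rw [Finset.sum_insert (by simp; omega), Finset.sum_singleton, pow_one, hfa1,
        hcoefpow (a+1) (by omega) le_rfl, if_pos rfl, mul_one]
    · intro x hx hxn
      simp only [Finset.mem_insert, Finset.mem_singleton, not_or] at hxn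
      simp only [Finset.mem_range] at hx
      rcases Nat.eq_zero_or_pos x with rfl | hx0
      · simp
      · rcases Nat.lt_or_ge x 2 with h2 | h2
        · interval_cases x
          · simp at hxn
        · rw [hcoefpow x h2 (by omega), if_neg (by omega), mul_zero]
  -- right side
  have rhs : coeff (a+1) (fcomp f g) = coeff (a+1) g + u * γ ^ (a+1) := by
    rw [coeff_fcomp]
    have hsub : ({1, a+1} : Finset ℕ) ⊆ Finset.range (a+2) := by
      intro x hx
      simp only [Finset.mem_insert, Finset.mem_singleton] at hx
      rcases hx with rfl | rfl <;> simp [Finset.mem_range] <;> omega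
    rw [← Finset.sum_subset hsub]
    · rw [Finset.sum_insert (by simp; omega), Finset.sum_singleton, pow_one, hf1, one_mul,
        hfa1, coeff_self_pow hg0]
    · intro x hx hxn
      simp only [Finset.mem_insert, Finset.mem_singleton, not_or] at hxn
      rcases Nat.eq_zero_or_pos x with rfl | hx0
      · simp [hf0]
      · rw [hfm x (by simp only [Finset.mem_range] at hx; omega) hxn.1, zero_mul]
  have heq : γ * u + coeff (a+1) g = coeff (a+1) g + u * γ ^ (a+1) := by
    rw [← lhs, ← rhs, hcomm]
  have h2 : γ * u = γ ^ (a+1) * u := by linear_combination heq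
  have h3 : γ = γ ^ (a + 1) := mul_right_cancel₀ hu h2
  have h5 : γ * γ ^ a = γ * 1 := by
    rw [mul_one, ← pow_succ']
    exact h3.symm
  exact mul_left_cancel₀ hγ0 h5

lemma dvd_of_root_pow {K : Type*} [Field K] {γ : K} {q : ℕ} (hq0 : 0 < q) (hγq : γ ^ q = 1)
    (hqmin : ∀ j, 0 < j → j < q → γ ^ j ≠ 1) {a : ℕ} (ha : γ ^ a = 1) : q ∣ a := by
  have hmod : γ ^ (a % q) = 1 := by
    conv at ha => rw [← Nat.div_add_mod a q]
    rw [pow_add, pow_mul, hγq, one_pow, one_mul] at ha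
    exact ha
  rcases Nat.eq_zero_or_pos (a % q) with h0 | hpos
  · exact Nat.dvd_of_mod_eq_zero h0
  · exact absurd hmod (hqmin _ hpos (Nat.mod_lt _ hq0))


end Aux

/-- Keating-type lemma: with `i_n = ord((g^{q p^n}(ζ) - ζ)/ζ)` finite, if `p ∤ i_n` then
`i_{n+1} ≥ p·i_n + q`, and if `p ∣ i_n` then `i_{n+1} = p·i_n`. -/
theorem stmt9 {k : Type*} [Field k] (p : ℕ) (hp : p.Prime) [CharP k p]
    (γ : k) (q : ℕ) (hq0 : 0 < q) (hγq : γ ^ q = 1)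
    (hqmin : ∀ j, 0 < j → j < q → γ ^ j ≠ 1)
    (g : PowerSeries k) (hg0 : PowerSeries.constantCoeff g = 0)
    (hg1 : PowerSeries.coeff 1 g = γ)
    (n : ℕ) (i : ℕ)
    (hi : PowerSeries.order (fit g (q * p ^ n) - PowerSeries.X) = ((i + 1 : ℕ) : ℕ∞)) :
    (¬ p ∣ i →
      ∀ j : ℕ,
        PowerSeries.order (fit g (q * p ^ (n + 1)) - PowerSeries.X) = ((j + 1 : ℕ) : ℕ∞) →
        p * i + q ≤ j) ∧
    (p ∣ i →
      PowerSeries.order (fit g (q * p ^ (n + 1)) - PowerSeries.X) = ((p * i + 1 : ℕ) : ℕ∞)) := by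

  haveI : Fact p.Prime := ⟨hp⟩
  haveI : NeZero p := ⟨hp.ne_zero⟩
  have hγ0 : γ ≠ 0 := by
    intro h
    rw [h, zero_pow (by omega)] at hγq
    exact zero_ne_one hγq
  have hg1' : coeff 1 g ≠ 0 := by rw [hg1]; exact hγ0
  set f : PowerSeries k := fit g (q * p ^ n) with hfdef
  have hf0 : constantCoeff f = 0 := constantCoeff_fit hg0 _
  have hf1 : coeff 1 f = 1 := by
    rw [hfdef, coeff_one_fit, hg1, pow_mul, hγq, one_pow]
  obtain ⟨hcoef, hlow⟩ := (order_eq_nat).mp hi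
  have hi1 : 1 ≤ i := by
    by_contra hcon
    have : i = 0 := by omega
    subst this
    apply hcoef
    rw [map_sub, hf1, coeff_X, if_pos rfl, sub_self]
  have hdvd : (X : PowerSeries k) ^ (i + 1) ∣ f - X := X_pow_dvd_iff.mpr hlow
  set u : k := coeff (i+1) (f - X) with hu
  -- q ∣ i
  have hγi : γ ^ i = 1 := by
    rw [← hg1]
    exact gamma_pow_eq_one hg0 hi1 hdvd hcoef hg1' (fit_comm hg0 _).symm
  have hqi : q ∣ i := dvd_of_root_pow hq0 hγq hqmin hγi
  -- next level
  have hFf : fit g (q * p ^ (n + 1)) = fit f p := by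
    rw [hfdef, ← fit_mul hg0]
    congr 1
    ring
  obtain ⟨hKdvd, hKcoef⟩ := keating_core p hp hi1 hf0 hdvd
  rw [← hFf] at hKdvd hKcoef
  constructor
  · -- case ¬ p ∣ i
    intro hpi j hj
    -- the product vanishes
    have hizmod : (i : ZMod p) ≠ 0 := by
      rw [Ne, ZMod.natCast_eq_zero_iff]
      exact hpi
    set z : ZMod p := -(i : ZMod p)⁻¹ with hz
    have hfac : ((1 + z.val * i : ℕ) : k) = 0 := by
      rw [CharP.cast_eq_zero_iff k p, ← ZMod.natCast_eq_zero_iff]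
      push_cast
      rw [ZMod.natCast_zmod_val, hz, neg_mul, inv_mul_cancel₀ hizmod]
      ring
    have hprod : (∏ t ∈ Finset.range p, ((1 + t * i : ℕ) : k)) = 0 :=
      Finset.prod_eq_zero (Finset.mem_range.mpr (ZMod.val_lt z)) hfac
    have hcz : coeff (1 + p * i) (fit g (q * p ^ (n + 1)) - X) = 0 := by
      rw [hKcoef, hprod, mul_zero]
    obtain ⟨hcoefj, hlowj⟩ := (order_eq_nat).mp hj
    have hjge : p * i + 1 ≤ j := by
      by_contra hcon
      apply hcoefj
      rcases Nat.lt_or_ge (j+1) (1 + p * i) with hlt | hge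
      · exact coeff_eq_zero_of_X_pow_dvd hKdvd hlt
      · have : j + 1 = 1 + p * i := by omega
        rw [this]
        exact hcz
    -- q ∣ j
    have hj1 : 1 ≤ j := by
      have := hp.two_le
      nlinarith
    have hdvdj : (X : PowerSeries k) ^ (j + 1) ∣ fit g (q * p ^ (n+1)) - X :=
      X_pow_dvd_iff.mpr hlowj
    have hγj : γ ^ j = 1 := by
      rw [← hg1]
      exact gamma_pow_eq_one hg0 hj1 hdvdj hcoefj hg1' (fit_comm hg0 _).symm
    have hqj : q ∣ j := dvd_of_root_pow hq0 hγq hqmin hγj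
    have hqsub : q ∣ j - p * i := Nat.dvd_sub hqj (Dvd.dvd.mul_left hqi p)
    have := Nat.le_of_dvd (by omega) hqsub
    omega
  · -- case p ∣ i
    intro hpi
    have hprod : (∏ t ∈ Finset.range p, ((1 + t * i : ℕ) : k)) = 1 := by
      apply Finset.prod_eq_one
      intro t _
      push_cast
      rw [(CharP.cast_eq_zero_iff k p i).mpr hpi]
      ring
    have hcoefF : coeff (1 + p * i) (fit g (q * p ^ (n + 1)) - X) = u ^ p := by
      rw [hKcoef, hprod, mul_one]
    rw [show ((p * i + 1 : ℕ) : ℕ∞) = ((1 + p * i : ℕ) : ℕ∞) by norm_num; ring_nf]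
    apply (order_eq_nat).mpr
    constructor
    · rw [hcoefF]
      exact pow_ne_zero p hcoef
    · intro s hs
      exact coeff_eq_zero_of_X_pow_dvd hKdvd hs
end

section
/- Let p be a prime, k a field of characteristic p, and q ≥ 2 an integer not divisible by p. Let γ ∈ k* with γ^q = 1 and a₁, a₂ ∈ k, and let g(ζ) ∈ k[[ζ]] satisfy g(ζ) ≡ γζ(1 + a₁ζ^q + a₂ζ^{2q}) mod ζ^{2q+2}. Then for every integer ℓ ≥ 1, g^ℓ(ζ) ≡ γ^ℓ ζ (1 + ℓ·a₁·ζ^q + (ℓ·a₂ + (q+1)·(ℓ(ℓ−1)/2)·a₁²)·ζ^{2q}) mod ζ^{2q+2}. -/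
open PowerSeries

lemma fcomp_X {k : Type*} [CommRing k] (f : PowerSeries k) : fcomp f X = f := by
  ext n
  simp [fcomp, coeff_X_pow]

lemma fcomp_add {k : Type*} [CommRing k] (f₁ f₂ h : PowerSeries k) :
    fcomp (f₁ + f₂) h = fcomp f₁ h + fcomp f₂ h := by
  ext n
  simp [fcomp, add_mul, Finset.sum_add_distrib]

lemma fcomp_CX_pow {k : Type*} [CommRing k] (c : k) (m : ℕ) (h : PowerSeries k)
    (hh : X ∣ h) : fcomp (C c * X ^ m) h = C c * h ^ m := by
  ext n
  simp only [fcomp, coeff_mk, coeff_C_mul, coeff_X_pow, PowerSeries.coeff_C_mul]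
  rw [Finset.sum_eq_single m]
  · by_cases hmn : m ≤ n
    · simp
    · push_neg at hmn
      have : (coeff n) (h ^ m) = 0 := by
        rw [X_pow_dvd_iff.1 (pow_dvd_pow_of_dvd hh m) n hmn]
      simp [this]
  · intro b _ hbm
    simp [hbm]
  · intro hm
    simp at hm
    by_cases hmn : m ≤ n
    · omega
    · push_neg at hmn
      have : (coeff n) (h ^ m) = 0 := by
        rw [X_pow_dvd_iff.1 (pow_dvd_pow_of_dvd hh m) n hmn]
      simp [this]

lemma fcomp_left_congr {k : Type*} [CommRing k] {N : ℕ} {f f' : PowerSeries k}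
    (hff' : (X : PowerSeries k) ^ N ∣ f - f') (h : PowerSeries k) :
    (X : PowerSeries k) ^ N ∣ fcomp f h - fcomp f' h := by
  rw [X_pow_dvd_iff]
  intro n hn
  have hc : ∀ m, m < N → coeff m f = coeff m f' := by
    intro m hm
    have := X_pow_dvd_iff.1 hff' m hm
    rw [map_sub] at this
    linear_combination this
  simp only [fcomp, map_sub, coeff_mk, ← Finset.sum_sub_distrib]
  apply Finset.sum_eq_zero
  intro m hm
  rw [hc m (by simp at hm; omega)]
  ring

lemma fcomp_right_congr {k : Type*} [CommRing k] {N : ℕ} (f : PowerSeries k)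
    {h h' : PowerSeries k} (hd : (X : PowerSeries k) ^ N ∣ h - h') :
    (X : PowerSeries k) ^ N ∣ fcomp f h - fcomp f h' := by
  rw [X_pow_dvd_iff]
  intro n hn
  simp only [fcomp, map_sub, coeff_mk, ← Finset.sum_sub_distrib]
  apply Finset.sum_eq_zero
  intro m _
  have hdm : (X : PowerSeries k) ^ N ∣ h ^ m - h' ^ m :=
    dvd_trans hd (sub_dvd_pow_sub_pow h h' m)
  have := X_pow_dvd_iff.1 hdm n hn
  rw [map_sub] at this
  rw [← mul_sub]
  rw [show coeff n (h^m) - coeff n (h'^m) = 0 from this]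
  ring

lemma binom_trunc {k : Type*} [CommRing k] {d : ℕ} {v : PowerSeries k}
    (hv : (X : PowerSeries k) ^ d ∣ v) (n : ℕ) :
    (X : PowerSeries k) ^ (2 * d) ∣ (1 + v) ^ n - (1 + C (n : k) * v) := by
  induction n with
  | zero => simp
  | succ n ih =>
    have hv2 : (X : PowerSeries k) ^ (2 * d) ∣ v ^ 2 := by
      obtain ⟨t, rfl⟩ := hv
      exact ⟨t ^ 2, by ring⟩
    have key : (1 + v) ^ (n + 1) - (1 + C ((n + 1 : ℕ) : k) * v)
        = (1 + v) * ((1 + v) ^ n - (1 + C (n : k) * v)) + C (n : k) * v ^ 2 := by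
      simp only [Nat.cast_add, Nat.cast_one, map_add, map_one]
      ring
    rw [key]
    exact dvd_add (Dvd.dvd.mul_left ih _) (Dvd.dvd.mul_left hv2 _)

lemma one_add_pow_trunc {k : Type*} [CommRing k] {d : ℕ} {v : PowerSeries k}
    (hv : (X : PowerSeries k) ^ d ∣ v) (n : ℕ) :
    (X : PowerSeries k) ^ d ∣ (1 + v) ^ n - 1 := by
  have h1 := binom_trunc hv n
  have h2 : (X : PowerSeries k) ^ d ∣ (1 + v) ^ n - (1 + C (n : k) * v) :=
    dvd_trans (pow_dvd_pow X (by omega)) h1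
  have h3 := dvd_add h2 (Dvd.dvd.mul_left hv (C (n : k)))
  rwa [show (1 + v) ^ n - (1 + C (n : k) * v) + C (n : k) * v = (1 + v) ^ n - 1 from by ring] at h3

lemma final_alg {k : Type*} [CommRing k] {q : ℕ} (hq : 1 ≤ q)
    (γ c a₁ a₂ b₁ b₂ : k) (hcq : c ^ q = 1) :
    (X : PowerSeries k) ^ (2 * q + 2) ∣
      (C γ * (C c * X * (1 + C b₁ * X ^ q + C b₂ * X ^ (2 * q))) ^ 1
        + C (γ * a₁) * (C c * X * (1 + C b₁ * X ^ q + C b₂ * X ^ (2 * q))) ^ (q + 1)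
        + C (γ * a₂) * (C c * X * (1 + C b₁ * X ^ q + C b₂ * X ^ (2 * q))) ^ (2 * q + 1))
      - C (γ * c) * X *
          (1 + C (b₁ + a₁) * X ^ q
             + C (b₂ + a₂ + ((q + 1 : ℕ) : k) * a₁ * b₁) * X ^ (2 * q)) := by
  obtain ⟨d, rfl⟩ : ∃ d, q = d + 1 := ⟨q - 1, by omega⟩
  set w : PowerSeries k := C b₁ * X ^ (d + 1) + C b₂ * X ^ (2 * (d + 1)) with hw
  have hwd : (X : PowerSeries k) ^ (d + 1) ∣ w :=
    ⟨C b₁ + C b₂ * X ^ (d + 1), by rw [hw]; ring⟩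
  obtain ⟨v₁, hv₁⟩ := binom_trunc hwd (d + 1 + 1)
  obtain ⟨v₂, hv₂⟩ := one_add_pow_trunc hwd (2 * (d + 1) + 1)
  have e₁ : (1 + w) ^ (d + 1 + 1) = 1 + C ((d + 1 + 1 : ℕ) : k) * w + X ^ (2 * (d + 1)) * v₁ := by
    linear_combination hv₁
  have e₂ : (1 + w) ^ (2 * (d + 1) + 1) = 1 + X ^ (d + 1) * v₂ := by
    linear_combination hv₂
  have hc1 : (C c) ^ (d + 1 + 1) = C c := by
    rw [← map_pow]
    congr 1
    rw [pow_succ, hcq, one_mul]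
  have hc2 : (C c) ^ (2 * (d + 1) + 1) = C c := by
    rw [← map_pow]
    congr 1
    rw [show 2 * (d + 1) + 1 = (d + 1) + ((d + 1) + 1) from by ring, pow_add, hcq, pow_succ, hcq,
      one_mul, one_mul]
  refine ⟨X ^ d * (C c * (C (γ * a₁) * (C ((d + 1 + 1 : ℕ) : k) * C b₂ + v₁)
      + C (γ * a₂) * v₂)), ?_⟩
  have expand : ∀ m : ℕ, (C c * X * (1 + w)) ^ m = (C c) ^ m * X ^ m * (1 + w) ^ m := by
    intro m; rw [mul_pow, mul_pow]
  rw [show (1 : PowerSeries k) + C b₁ * X ^ (d + 1) + C b₂ * X ^ (2 * (d + 1)) = 1 + w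
      from by rw [hw]; ring]
  rw [expand, expand, expand, hc1, hc2, e₁, e₂, pow_one]
  simp only [map_mul, map_add, Nat.cast_add, Nat.cast_one, map_one, hw,
    Nat.cast_ofNat, Nat.cast_mul]
  ring

lemma tri (m : ℕ) : (m + 2) * (m + 1) / 2 = (m + 1) * m / 2 + (m + 1) := by
  have h2 : 2 ∣ (m + 1) * m := by
    rw [mul_comm]; exact (Nat.even_mul_succ_self m).two_dvd
  obtain ⟨t, ht⟩ := h2
  have h1 : (m + 2) * (m + 1) = 2 * t + 2 * (m + 1) := by
    rw [show (m + 2) * (m + 1) = (m + 1) * m + 2 * (m + 1) from by ring, ht]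
  rw [ht, h1]
  omega


/-- If `g(ζ) ≡ γζ(1 + a₁ζ^q + a₂ζ^{2q}) mod ζ^{2q+2}` with `γ^q = 1`, `q ≥ 2` not
divisible by `p = char k`, then for every `ℓ ≥ 1`,
`g^ℓ(ζ) ≡ γ^ℓ ζ (1 + ℓa₁ζ^q + (ℓa₂ + (q+1)·(ℓ(ℓ-1)/2)·a₁²)ζ^{2q}) mod ζ^{2q+2}`. -/
theorem stmt13 {k : Type*} [Field k] (p : ℕ) (hp : p.Prime) [CharP k p]
    (q : ℕ) (hq : 2 ≤ q) (hpq : ¬ p ∣ q)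
    (γ : k) (hγ0 : γ ≠ 0) (hγq : γ ^ q = 1) (a₁ a₂ : k)
    (g : PowerSeries k)
    (hg : (PowerSeries.X : PowerSeries k) ^ (2 * q + 2) ∣
      g - PowerSeries.C γ * PowerSeries.X *
        (1 + PowerSeries.C a₁ * PowerSeries.X ^ q
           + PowerSeries.C a₂ * PowerSeries.X ^ (2 * q))) :
    ∀ ℓ : ℕ, 1 ≤ ℓ →
      (PowerSeries.X : PowerSeries k) ^ (2 * q + 2) ∣
        fit g ℓ - PowerSeries.C (γ ^ ℓ) * PowerSeries.X *
          (1 + PowerSeries.C ((ℓ : k) * a₁) * PowerSeries.X ^ q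
             + PowerSeries.C ((ℓ : k) * a₂
                 + ((q + 1 : ℕ) : k) * ((ℓ * (ℓ - 1) / 2 : ℕ) : k) * a₁ ^ 2)
               * PowerSeries.X ^ (2 * q)) := by
  set G : PowerSeries k := C γ * X * (1 + C a₁ * X ^ q + C a₂ * X ^ (2 * q)) with hG
  have hGmono : G = C γ * X ^ 1 + C (γ * a₁) * X ^ (q + 1) + C (γ * a₂) * X ^ (2 * q + 1) := by
    rw [hG, map_mul, map_mul]; ring
  have hfcompG : ∀ h : PowerSeries k, X ∣ h →
      fcomp G h = C γ * h ^ 1 + C (γ * a₁) * h ^ (q + 1) + C (γ * a₂) * h ^ (2 * q + 1) := by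
    intro h hh
    rw [hGmono, fcomp_add, fcomp_add, fcomp_CX_pow _ _ _ hh, fcomp_CX_pow _ _ _ hh,
      fcomp_CX_pow _ _ _ hh]
  intro ℓ hℓ
  induction ℓ, hℓ using Nat.le_induction with
  | base =>
    rw [show fit g 1 = g from by simp [fit, fcomp_X]]
    have e2 : ((1 : ℕ) : k) * a₂ + ((q + 1 : ℕ) : k) * ((1 * (1 - 1) / 2 : ℕ) : k) * a₁ ^ 2
        = a₂ := by norm_num
    have e1 : ((1 : ℕ) : k) * a₁ = a₁ := by norm_num
    rw [pow_one, e1, e2, ← hG]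
    exact hg
  | succ n hn ih =>
    obtain ⟨m, rfl⟩ : ∃ m, n = m + 1 := ⟨n - 1, by omega⟩
    set n := m + 1
    set b₁ : k := (n : k) * a₁ with hb₁
    set b₂ : k := (n : k) * a₂ + ((q + 1 : ℕ) : k) * ((n * (n - 1) / 2 : ℕ) : k) * a₁ ^ 2 with hb₂
    set T : PowerSeries k := C (γ ^ n) * X * (1 + C b₁ * X ^ q + C b₂ * X ^ (2 * q)) with hT
    have hXT : (X : PowerSeries k) ∣ T :=
      ⟨C (γ ^ n) * (1 + C b₁ * X ^ q + C b₂ * X ^ (2 * q)), by rw [hT]; ring⟩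
    have h1 : (X : PowerSeries k) ^ (2 * q + 2) ∣ fcomp g (fit g n) - fcomp G (fit g n) :=
      fcomp_left_congr hg _
    have h2 : (X : PowerSeries k) ^ (2 * q + 2) ∣ fcomp G (fit g n) - fcomp G T :=
      fcomp_right_congr G ih
    have hcq : (γ ^ n) ^ q = 1 := by rw [← pow_mul, mul_comm, pow_mul, hγq, one_pow]
    have h4 := final_alg (k := k) (q := q) (by omega) γ (γ ^ n) a₁ a₂ b₁ b₂ hcq
    rw [← hfcompG T hXT] at h4
    -- now rewrite the target of h4 to the goal's form
    have eγ : γ * γ ^ n = γ ^ (n + 1) := by rw [pow_succ]; ring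
    have e1 : b₁ + a₁ = ((n + 1 : ℕ) : k) * a₁ := by rw [hb₁]; push_cast; ring
    have e2 : b₂ + a₂ + ((q + 1 : ℕ) : k) * a₁ * b₁
        = ((n + 1 : ℕ) : k) * a₂
          + ((q + 1 : ℕ) : k) * (((n + 1) * ((n + 1) - 1) / 2 : ℕ) : k) * a₁ ^ 2 := by
      rw [show (n + 1) * ((n + 1) - 1) / 2 = n * (n - 1) / 2 + n from by simpa [n] using tri m]
      rw [hb₁, hb₂]; push_cast; ring
    rw [eγ, e1, e2] at h4
    have h5 := dvd_add h1 (dvd_add h2 h4)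
    rw [show fcomp g (fit g n) - fcomp G (fit g n)
        + (fcomp G (fit g n) - fcomp G T + (fcomp G T - C (γ ^ (n + 1)) * X *
          (1 + C (((n + 1 : ℕ) : k) * a₁) * X ^ q
             + C (((n + 1 : ℕ) : k) * a₂
                 + ((q + 1 : ℕ) : k) * ((((n + 1) * ((n + 1) - 1) / 2 : ℕ)) : k) * a₁ ^ 2)
               * X ^ (2 * q))))
        = fcomp g (fit g n) - C (γ ^ (n + 1)) * X *
          (1 + C (((n + 1 : ℕ) : k) * a₁) * X ^ q
             + C (((n + 1 : ℕ) : k) * a₂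
                 + ((q + 1 : ℕ) : k) * ((((n + 1) * ((n + 1) - 1) / 2 : ℕ)) : k) * a₁ ^ 2)
               * X ^ (2 * q)) from by ring] at h5
    rw [show fit g (n + 1) = fcomp g (fit g n) from by simp [fit]]
    exact h5
end
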